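/- Let φ : G → G satisfy φ(1) = 1, let △ = {h ∈ G : h^{∗2} = h^{⊗4}}, and suppose g ∈ G commutes with both g^{⊗2} and g^{⊗4}, i.e. [g, g^{⊗2}] = 1 and [g, g^{⊗4}] = 1. Then g ∈ φ⁻¹(Im φ ∩ △) \ ker φ (i.e. φ(g) lies in Im φ ∩ △ and φ(g) ≠ 1) if and only if p∗(g) = 3. -/

import Mathlib

/-- The `∗`-iterates: `starIter φ g (p-1)` is `g^{∗p}`, i.e. `g^{∗1} = g` and
`g^{∗(p+1)} = g^{∗p} ∗ g^{∗p} = g^{∗p} ∘ φ(g^{∗p})`. -/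
def starIter {G : Type*} [CommGroup G] (φ : G → G) (g : G) : ℕ → G
  | 0 => g
  | n + 1 => starIter φ g n * φ (starIter φ g n)

/-- The period `p∗(g) = min {i > 1 | g^{∗i} = g} - 1`, valued in `ℕ∞` so that the
minimum of the empty set is `∞`. -/
noncomputable def pstar {G : Type*} [CommGroup G] (φ : G → G) (g : G) : ℕ∞ :=
  sInf {i : ℕ∞ | ∃ n : ℕ, i = n ∧ 1 < n ∧ starIter φ g (n - 1) = g} - 1

/-- Dyadic `⊗`-powers: `opow2 ot g j = g^{⊗2^j}`, with `g^{⊗2^0} = g` and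
`g^{⊗2^j} = g^{⊗2^{j-1}} ⊗ g^{⊗2^{j-1}}`. -/
def opow2 {G : Type*} (ot : G → G → G) (g : G) : ℕ → G
  | 0 => g
  | j + 1 => ot (opow2 ot g j) (opow2 ot g j)

lemma enat_sub_one_eq_three {a : ℕ∞} : a - 1 = 3 ↔ a = 4 := by
  cases a with
  | top => simp
  | coe k =>
      rw [show ((1:ℕ∞)) = ((1:ℕ):ℕ∞) by norm_cast, ← ENat.coe_sub,
        show ((3:ℕ∞)) = ((3:ℕ):ℕ∞) by norm_cast, show ((4:ℕ∞)) = ((4:ℕ):ℕ∞) by norm_cast,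
        Nat.cast_inj, Nat.cast_inj]
      omega

/-- Let `(G, ∘)` be a finite group with `g ∘ g = 1` (hence abelian),
`g₁ ∗ g₂ = g₁ ∘ φ(g₂)`, and let `⊗` satisfy `h ⊗ h = φ(h)` and distribute over `∘`
in both arguments.  Suppose `φ(1) = 1`, let `△ = {h | h^{∗2} = h^{⊗4}}`, and suppose
`g` commutes with `g^{⊗2}` and `g^{⊗4}` (commutators `[g, g^{⊗2}] = [g, g^{⊗4}] = 1`).
Then `g ∈ φ⁻¹(Im φ ∩ △) \ ker φ` (i.e. `φ(g) ∈ Im φ ∩ △` and `φ(g) ≠ 1`)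
iff `p∗(g) = 3`. -/
theorem stmt8 {G : Type*} [CommGroup G] [Fintype G] (h2 : ∀ g : G, g * g = 1)
    (φ : G → G) (ot : G → G → G) (hsq : ∀ h : G, ot h h = φ h)
    (hld : ∀ a b c : G, ot (a * b) c = ot a c * ot b c)
    (hrd : ∀ a b c : G, ot a (b * c) = ot a b * ot a c)
    (hφ1 : φ 1 = 1) (g : G)
    (hcomm2 : ot g (opow2 ot g 1) * ot (opow2 ot g 1) g = 1)
    (hcomm4 : ot g (opow2 ot g 2) * ot (opow2 ot g 2) g = 1) :
    (φ g ∈ Set.range φ ∩ {h : G | starIter φ h 1 = opow2 ot h 2} ∧ φ g ≠ 1) ↔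
      pstar φ g = 3 := by
  have key : ∀ a b : G, ot a b * ot b a = 1 → φ (a * b) = φ a * φ b := by
    intro a b h
    have : ot (a * b) (a * b) = ot a a * ot b b := by
      rw [hld, hrd, hrd]
      calc ot a a * ot a b * (ot b a * ot b b)
          = ot a a * ot b b * (ot a b * ot b a) := by ac_rfl
        _ = ot a a * ot b b := by rw [h, mul_one]
    rw [← hsq, ← hsq, ← hsq, this]
  -- opow2 computations
  have hop1 : opow2 ot g 1 = φ g := by simp [opow2, hsq]
  have hop2 : opow2 ot g 2 = φ (φ g) := by simp [opow2, hsq]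
  set a := φ g with ha
  set b := φ a with hb
  set c := φ b with hc
  have hA : φ (g * a) = a * b := by
    have := key g a (by rw [hop1] at hcomm2; exact hcomm2)
    rw [this, ← hb]
  have hB : φ (g * b) = a * c := by
    have := key g b (by rw [hop2] at hcomm4; exact hcomm4)
    rw [this, ← hc]
  have hs1 : starIter φ g 1 = g * a := by simp [starIter]; rfl
  have hs2 : starIter φ g 2 = g * b := by
    show starIter φ g 1 * φ (starIter φ g 1) = g * b
    rw [hs1, hA]
    calc g * a * (a * b) = g * b * (a * a) := by ac_rfl
      _ = g * b := by rw [h2, mul_one]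
  have hs3 : starIter φ g 3 = g * b * (a * c) := by
    show starIter φ g 2 * φ (starIter φ g 2) = _
    rw [hs2, hB]
  -- the triangle condition for a
  have htri : (starIter φ a 1 = opow2 ot a 2) ↔ a * b = c := by
    have : opow2 ot a 2 = φ (φ a) := by simp [opow2, hsq]
    rw [this, ← hb, ← hc]
    simp [starIter, ← hb]
  set S : Set ℕ∞ := {i : ℕ∞ | ∃ n : ℕ, i = n ∧ 1 < n ∧ starIter φ g (n - 1) = g} with hS
  have hpstar : pstar φ g = sInf S - 1 := rfl
  rw [hpstar, enat_sub_one_eq_three]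
  constructor
  · rintro ⟨⟨-, htr⟩, hne⟩
    rw [Set.mem_setOf_eq, htri] at htr
    have hbne : b ≠ 1 := by
      intro hb1
      apply hne
      have hc1 : c = 1 := by rw [hc, hb1, hφ1]
      have htr' := htr
      rw [hb1, mul_one, hc1] at htr'
      exact htr' 
    have h3 : starIter φ g 3 = g := by
      rw [hs3, ← htr]
      calc g * b * (a * (a * b)) = g * (a * a) * (b * b) := by ac_rfl
        _ = g := by rw [h2, h2, mul_one, mul_one]
    have h4S : (4 : ℕ∞) ∈ S := ⟨4, by norm_cast, by norm_num, by exact h3⟩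
    apply le_antisymm
    · exact csInf_le (OrderBot.bddBelow S) h4S
    · apply le_csInf ⟨4, h4S⟩
      rintro i ⟨n, rfl, hn1, hng⟩
      rcases Nat.lt_or_ge n 4 with h4 | h4
      · interval_cases n
        · norm_num at hng
          rw [hs1] at hng
          exact absurd (by rwa [mul_eq_left] at hng) hne
        · norm_num at hng
          rw [hs2] at hng
          exact absurd (by rwa [mul_eq_left] at hng) hbne
      · exact_mod_cast Nat.cast_le.mpr h4
  · intro hInf
    have hmem : (4 : ℕ∞) ∈ S := by
      rw [← hInf]
      apply csInf_mem
      rcases Set.eq_empty_or_nonempty S with h | h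
      · rw [h] at hInf; simp [sInf_empty] at hInf
      · exact h
    obtain ⟨n, hn, hn1, hng⟩ := hmem
    have hn4 : n = 4 := by exact_mod_cast hn.symm
    subst hn4
    norm_num at hng
    have hane : a ≠ 1 := by
      intro h1
      have h2S : (2 : ℕ∞) ∈ S := ⟨2, by norm_cast, by norm_num, by
        norm_num; rw [hs1, h1, mul_one]⟩
      have hle := csInf_le (OrderBot.bddBelow S) h2S
      rw [hInf] at hle
      norm_num at hle
    have h' : g * (b * (a * c)) = g := by
      rw [← mul_assoc, ← hs3]; exact hng
    have hac : b * (a * c) = 1 := by rwa [mul_eq_left] at h'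
    have habc : a * b = c := by
      have hh : a * b * (c * c) = b * (a * c) * c := by ac_rfl
      rwa [h2, mul_one, hac, one_mul] at hh
    exact ⟨⟨⟨g, rfl⟩, by rw [Set.mem_setOf_eq, htri]; exact habc⟩, hane⟩
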